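/- Let A be a unital C*-algebra and a ∈ A. Then the map λ ↦ log((a − λ·1)*·(a − λ·1) + 1), defined via the continuous functional calculus (CFC.log), is continuous from ℂ to A in the norm topology. -/

import Mathlib

open Polynomial in
theorem continuous_log_one_add_abs_sq_shift
    {A : Type*} [CStarAlgebra A] (a : A) :
    Continuous fun lam : ℂ =>
      CFC.log (star (a - lam • 1) * (a - lam • 1) + 1) := by
  obtain hA | hA := subsingleton_or_nontrivial A
  · exact continuous_of_const fun x y => Subsingleton.elim _ _
  set b : ℂ → A := fun lam => star (a - lam • 1) * (a - lam • 1) + 1 with hbdef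
  have hb_cont : Continuous b := by fun_prop
  have hb_sa : ∀ lam, IsSelfAdjoint (b lam) := fun lam =>
    (IsSelfAdjoint.star_mul_self (a - lam • 1)).add (IsSelfAdjoint.one A)
  -- spectrum lower bound
  have hspec_lb : ∀ lam, ∀ x ∈ spectrum ℝ (b lam), 1 ≤ x := by
    intro lam x hx
    have heq : b lam = algebraMap ℝ A 1 + star (a - lam • 1) * (a - lam • 1) := by
      simp [hbdef, add_comm]
    rw [heq, ← spectrum.singleton_add_eq] at hx
    obtain ⟨u, hu, v, hv, rfl⟩ := Set.mem_add.mp hx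
    have := spectrum_star_mul_self_nonneg v hv
    simp only [Set.mem_singleton_iff] at hu
    subst hu; linarith
  -- spectrum upper bound
  have hspec_ub : ∀ lam, ∀ x ∈ spectrum ℝ (b lam), x ≤ ‖b lam‖ := fun lam x hx =>
    (le_abs_self x).trans (spectrum.norm_le_norm_of_mem hx)
  rw [continuous_iff_continuousAt]
  intro lam₀
  rw [Metric.continuousAt_iff]
  intro ε hε
  set R : ℝ := ‖lam₀‖ + 1
  set M : ℝ := (‖a‖ + R) ^ 2 + 1 with hMdef
  have hM1 : (1:ℝ) ≤ M := by nlinarith [sq_nonneg (‖a‖ + R)]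
  have hnorm_b : ∀ lam : ℂ, ‖lam‖ ≤ R → ‖b lam‖ ≤ M := by
    intro lam hlam
    have h1 : ‖a - lam • 1‖ ≤ ‖a‖ + R := by
      calc ‖a - lam • 1‖ ≤ ‖a‖ + ‖lam • (1:A)‖ := norm_sub_le _ _
        _ ≤ ‖a‖ + ‖lam‖ * ‖(1:A)‖ := by rw [norm_smul]
        _ ≤ ‖a‖ + R := by rw [norm_one]; linarith
    calc ‖b lam‖ ≤ ‖star (a - lam • 1) * (a - lam • 1)‖ + ‖(1:A)‖ := norm_add_le _ _
      _ = ‖a - lam • 1‖ * ‖a - lam • 1‖ + 1 := by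
          rw [CStarRing.norm_star_mul_self, norm_one]
      _ ≤ (‖a‖ + R) * (‖a‖ + R) + 1 := by
          have h0 : (0:ℝ) ≤ ‖a‖ + R := by positivity
          gcongr
      _ = M := by rw [hMdef]; ring
  have hspec : ∀ lam : ℂ, ‖lam‖ ≤ R → spectrum ℝ (b lam) ⊆ Set.Icc 1 M := by
    intro lam hlam x hx
    exact ⟨hspec_lb lam x hx, (hspec_ub lam x hx).trans (hnorm_b lam hlam)⟩
  -- Weierstrass approximation of log on [1, M]
  obtain ⟨q, hq⟩ := exists_polynomial_near_of_continuousOn 1 M Real.log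
    (Real.continuousOn_log.mono (by intro x hx; simp; intro h; rw [h] at hx; exact absurd hx.1 (by norm_num)))
    (ε / 3) (by positivity)
  -- the polynomial approximation agrees with cfc on elements with spectrum in [1,M]
  have hkey : ∀ lam : ℂ, ‖lam‖ ≤ R → ‖CFC.log (b lam) - aeval (b lam) q‖ ≤ ε / 3 := by
    intro lam hlam
    have hs := hspec lam hlam
    have hlogc : ContinuousOn Real.log (spectrum ℝ (b lam)) :=
      Real.continuousOn_log.mono (fun x hx => by
        have := (hs hx).1; simp; linarith)
    rw [CFC.log, ← cfc_polynomial q (b lam) (hb_sa lam), ← cfc_sub _ _ _ hlogc (by fun_prop)]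
    refine norm_cfc_le (by positivity) fun x hx => ?_
    have := hq x (hs hx)
    rw [Real.norm_eq_abs, abs_sub_comm]
    linarith [abs_sub_comm (q.eval x) (Real.log x)]
  -- continuity of the polynomial part
  have hpoly_cont : Continuous fun lam : ℂ => aeval (b lam) q :=
    (q.continuous_aeval).comp hb_cont
  have := Metric.continuousAt_iff.mp (hpoly_cont.continuousAt (x := lam₀)) (ε / 3) (by positivity)
  obtain ⟨δ, hδ, hδ'⟩ := this
  refine ⟨min δ 1, by positivity, fun {lam} hlam => ?_⟩
  have hlam₁ : dist lam lam₀ < δ := lt_of_lt_of_le hlam (min_le_left _ _)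
  have hlamR : ‖lam‖ ≤ R := by
    have : ‖lam - lam₀‖ < 1 := lt_of_lt_of_le (by rwa [dist_eq_norm] at hlam) (min_le_right δ 1)
    calc ‖lam‖ = ‖lam₀ + (lam - lam₀)‖ := by ring_nf
      _ ≤ ‖lam₀‖ + ‖lam - lam₀‖ := norm_add_le _ _
      _ ≤ R := by simp only [R]; linarith
  have hlam₀R : ‖lam₀‖ ≤ R := by simp only [R]; linarith
  have h1 := hkey lam hlamR
  have h2 := hkey lam₀ hlam₀R
  have h3 := hδ' hlam₁
  rw [dist_eq_norm] at h3 ⊢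
  calc ‖CFC.log (b lam) - CFC.log (b lam₀)‖
      = ‖(CFC.log (b lam) - aeval (b lam) q) + (aeval (b lam) q - aeval (b lam₀) q)
          + (aeval (b lam₀) q - CFC.log (b lam₀))‖ := by congr 1; abel
    _ ≤ ‖CFC.log (b lam) - aeval (b lam) q‖ + ‖aeval (b lam) q - aeval (b lam₀) q‖
          + ‖aeval (b lam₀) q - CFC.log (b lam₀)‖ := norm_add₃_le
    _ < ε := by rw [norm_sub_rev (aeval (b lam₀) q)]; linarith
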